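/- arXiv:2409.11987 — 17 statements merged into one kernel-verified Lean document; each statement's English description precedes it below -/
import Mathlib

section
/- Let R be an associative ring with unity and a,b,c ∈ R. If p and p' are both left (b,c)-spectral idempotents of a (i.e., p² = p ∈ bRca, pb = b, cap = ca, and likewise for p'), then p = p'. -/
/-- Uniqueness of the left (b,c)-spectral idempotent. -/
theorem left_bc_spectral_idempotent_unique {R : Type*} [Ring R] (a b c p p' : R)
    (hp_idem : p * p = p) (hp_mem : ∃ t : R, p = b * t * (c * a))
    (hp_b : p * b = b) (hp_ca : c * a * p = c * a)
    (hp'_idem : p' * p' = p') (hp'_mem : ∃ t : R, p' = b * t * (c * a))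
    (hp'_b : p' * b = b) (hp'_ca : c * a * p' = c * a) :
    p = p' := by
  obtain ⟨t, ht⟩ := hp_mem
  obtain ⟨t', ht'⟩ := hp'_mem
  have h1 : p * p' = p := by
    rw [ht, mul_assoc (b*t), hp'_ca]
  have h2 : p * p' = p' := by
    rw [ht', ← mul_assoc p, ← mul_assoc p, hp_b]
  rw [← h1, h2]
end

section
/- Let R be an associative ring with unity and a,b,c ∈ R. If q and q' are both right (b,c)-spectral idempotents of a (i.e., q² = q ∈ abRc, cq = c, qab = ab, and likewise for q'), then q = q'. -/
/-- Uniqueness of the right (b,c)-spectral idempotent. -/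
theorem right_bc_spectral_idempotent_unique {R : Type*} [Ring R] (a b c q q' : R)
    (hq_idem : q * q = q) (hq_mem : ∃ t : R, q = a * b * t * c)
    (hq_c : c * q = c) (hq_ab : q * (a * b) = a * b)
    (hq'_idem : q' * q' = q') (hq'_mem : ∃ t : R, q' = a * b * t * c)
    (hq'_c : c * q' = c) (hq'_ab : q' * (a * b) = a * b) :
    q = q' := by
  obtain ⟨t, ht⟩ := hq_mem
  obtain ⟨t', ht'⟩ := hq'_mem
  have h1 : q * q' = q := by
    rw [ht]
    calc a * b * t * c * q' = a * b * t * (c * q') := by simp [mul_assoc]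
    _ = a * b * t * c := by rw [hq'_c]
  have h2 : q * q' = q' := by
    rw [ht']
    calc q * (a * b * t' * c) = q * (a * b) * t' * c := by simp [mul_assoc]
    _ = a * b * t' * c := by rw [hq_ab]
  rw [← h1, h2]
end

section
/- Let R be an associative ring with unity and a,b,c ∈ R. If a is (b,c)-polar, then b is regular, i.e., b ∈ bRb. -/
/-- If a is (b,c)-polar then b is regular. -/
theorem bc_polar_b_regular {R : Type*} [Ring R] (a b c : R)
    (h : ∃ p q : R,
      (p * p = p ∧ ∃ t : R, p = b * t * (c * a)) ∧
      (q * q = q ∧ ∃ t : R, q = a * b * t * c) ∧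
      p * b = b ∧ c * q = c ∧ c * a * p = c * a ∧ q * (a * b) = a * b) :
    ∃ y : R, b = b * y * b := by
  obtain ⟨p, q, ⟨-, t, hp⟩, -, hpb, -⟩ := h
  refine ⟨t * (c * a), ?_⟩
  calc b = p * b := hpb.symm
    _ = b * (t * (c * a)) * b := by rw [hp]; noncomm_ring
end

section
/- Let R be an associative ring with unity and a,b,c ∈ R. If a is (b,c)-polar, then cab is regular, i.e., cab ∈ (cab)R(cab). -/
/-- If a is (b,c)-polar then cab is regular. -/
theorem bc_polar_cab_regular {R : Type*} [Ring R] (a b c : R)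
    (h : ∃ p q : R,
      (p * p = p ∧ ∃ t : R, p = b * t * (c * a)) ∧
      (q * q = q ∧ ∃ t : R, q = a * b * t * c) ∧
      p * b = b ∧ c * q = c ∧ c * a * p = c * a ∧ q * (a * b) = a * b) :
    ∃ y : R, c * a * b = (c * a * b) * y * (c * a * b) := by
  obtain ⟨p, q, ⟨hp2, t, hpt⟩, _, _, _, hcap, _⟩ := h
  refine ⟨t, ?_⟩
  have : c * a * b * t * (c * a * b) = c * a * p * b := by
    rw [hpt]; noncomm_ring
  rw [this, hcap]
end

section
/- Let R be an associative ring with unity and a,b,c ∈ R. If a is (b,c)-invertible with (b,c)-inverse y, then a is (b,c)-polar with left (b,c)-spectral idempotent p = ya and right (b,c)-spectral idempotent q = ay. -/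
/-- If y is the (b,c)-inverse of a, then a is (b,c)-polar with
left spectral idempotent ya and right spectral idempotent ay. -/
theorem bc_invertible_implies_bc_polar {R : Type*} [Ring R] (a b c y : R)
    (hy_bR : ∃ u : R, y = b * u) (hy_Rc : ∃ v : R, y = v * c)
    (hyab : y * a * b = b) (hcay : c * a * y = c) :
    ((y * a) * (y * a) = y * a ∧ ∃ t : R, y * a = b * t * (c * a)) ∧
    ((a * y) * (a * y) = a * y ∧ ∃ t : R, a * y = a * b * t * c) ∧
    (y * a) * b = b ∧ c * (a * y) = c ∧
    c * a * (y * a) = c * a ∧ (a * y) * (a * b) = a * b := by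
  obtain ⟨u, hu⟩ := hy_bR
  obtain ⟨v, hv⟩ := hy_Rc
  have hyay : y * a * y = y := by
    calc y * a * y = v * (c * a * y) := by rw [hv]; noncomm_ring
    _ = y := by rw [hcay, hv]
  refine ⟨⟨?_, ⟨u * a * v, ?_⟩⟩, ⟨?_, ⟨u * a * v, ?_⟩⟩, ?_, ?_, ?_, ?_⟩
  · calc y * a * (y * a) = (y * a * y) * a := by noncomm_ring
      _ = y * a := by rw [hyay]
  · calc y * a = (y * a * y) * a := by rw [hyay]
      _ = (b * u) * a * (v * c) * a := by rw [← hu, ← hv]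
      _ = b * (u * a * v) * (c * a) := by noncomm_ring
  · calc a * y * (a * y) = a * (y * a * y) := by noncomm_ring
      _ = a * y := by rw [hyay]
  · calc a * y = a * (y * a * y) := by rw [hyay]
      _ = a * ((b * u) * a * (v * c)) := by rw [← hu, ← hv]
      _ = a * b * (u * a * v) * c := by noncomm_ring
  · exact hyab
  · rw [← mul_assoc, hcay]
  · calc c * a * (y * a) = (c * a * y) * a := by noncomm_ring
      _ = c * a := by rw [hcay]
  · calc a * y * (a * b) = a * (y * a * b) := by noncomm_ring
      _ = a * b := by rw [hyab]
end

section
/- Let R be an associative ring with unity and a,b,c ∈ R. If a is (b,c)-polar with left (b,c)-spectral idempotent p, and b⁻ is an inner inverse of b (b b⁻ b = b), then 1 + p − b b⁻ is left invertible in R, with left inverse b b⁻ + 1 − p. -/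
/-- If a is (b,c)-polar with left spectral idempotent p and b⁻ is an inner
inverse of b, then 1 + p - b b⁻ is left invertible with left inverse b b⁻ + 1 - p. -/
theorem one_add_p_sub_bbinv_left_invertible {R : Type*} [Ring R] (a b c p q bi : R)
    (hp_idem : p * p = p) (hp_mem : ∃ t : R, p = b * t * (c * a))
    (hp_b : p * b = b) (hp_ca : c * a * p = c * a)
    (hq_idem : q * q = q) (hq_mem : ∃ t : R, q = a * b * t * c)
    (hq_c : c * q = c) (hq_ab : q * (a * b) = a * b)
    (hbi : b * bi * b = b) :
    (b * bi + 1 - p) * (1 + p - b * bi) = 1 := by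
  obtain ⟨t, ht⟩ := hp_mem
  have h1 : b * bi * p = p := by
    rw [ht, show b * bi * (b * t * (c * a)) = b * bi * b * t * (c * a) by
      simp [mul_assoc], hbi]
  have h2 : p * (b * bi) = b * bi := by rw [← mul_assoc, hp_b]
  have h3 : b * bi * (b * bi) = b * bi := by rw [← mul_assoc, hbi]
  have expand : (b * bi + 1 - p) * (1 + p - b * bi)
      = b * bi + b * bi * p - b * bi * (b * bi) + 1 + p - b * bi
        - p - p * p + p * (b * bi) := by noncomm_ring
  rw [expand, h1, h2, h3, hp_idem]
  abel
end

section
/- Let R be an associative ring with unity and a,b,c ∈ R. If a is (b,c)-polar with right (b,c)-spectral idempotent q, and c⁻ is an inner inverse of c (c c⁻ c = c), then 1 + q − c⁻ c is right invertible in R, with right inverse c⁻ c + 1 − q. -/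
/-- If a is (b,c)-polar with right spectral idempotent q and c⁻ is an inner
inverse of c, then 1 + q - c⁻ c is right invertible with right inverse c⁻ c + 1 - q. -/
theorem one_add_q_sub_cinvc_right_invertible {R : Type*} [Ring R] (a b c p q ci : R)
    (hp_idem : p * p = p) (hp_mem : ∃ t : R, p = b * t * (c * a))
    (hp_b : p * b = b) (hp_ca : c * a * p = c * a)
    (hq_idem : q * q = q) (hq_mem : ∃ t : R, q = a * b * t * c)
    (hq_c : c * q = c) (hq_ab : q * (a * b) = a * b)
    (hci : c * ci * c = c) :
    (1 + q - ci * c) * (ci * c + 1 - q) = 1 := by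
  obtain ⟨t, ht⟩ := hq_mem
  have h1 : q * (ci * c) = q := by
    have : a * b * t * (c * ci * c) = a * b * t * c := by rw [hci]
    rw [ht]
    simpa [mul_assoc] using this
  have h2 : (ci * c) * q = ci * c := by rw [mul_assoc, hq_c]
  have h3 : (ci * c) * (ci * c) = ci * c := by
    rw [← mul_assoc, mul_assoc ci c ci, mul_assoc ci (c*ci) c, hci]
  simp only [mul_add, add_mul, sub_mul, mul_sub, one_mul, mul_one, h1, h2, h3, hq_idem]
  abel
end

section
/- Let R be an associative ring with unity and a,b ∈ R. Then a is (b,b)-polar if and only if a is polar along b. -/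
/-- a is (b,b)-polar iff a is polar along b. -/
theorem bb_polar_iff_polar_along {R : Type*} [Ring R] (a b : R) :
    (∃ p q : R,
      (p * p = p ∧ ∃ t : R, p = b * t * (b * a)) ∧
      (q * q = q ∧ ∃ t : R, q = a * b * t * b) ∧
      p * b = b ∧ b * q = b ∧ b * a * p = b * a ∧ q * (a * b) = a * b) ↔
    (∃ p : R, p * p = p ∧ p * (b * a) = (b * a) * p ∧ p * b = b ∧
      ∃ t : R, p = (b * a) * t * (b * a)) := by
  constructor
  · rintro ⟨p, q, ⟨hp2, t, hpt⟩, ⟨hq2, s, hqs⟩, hpb, hbq, hbap, hqab⟩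
    refine ⟨p, hp2, ?_, hpb, b * s * b * t, ?_⟩
    · have h1 : p * (b * a) = b * a := by rw [← mul_assoc, hpb]
      rw [h1, hbap]
    · have h2 : b * a * (b * s * b * t) * (b * a) = b * (a * b * s * b) * (t * (b * a)) := by
        simp only [mul_assoc]
      rw [hpt, h2, ← hqs, hbq, mul_assoc]
  · rintro ⟨p, hp2, hcomm, hpb, t, ht⟩
    have hpba : p * (b * a) = b * a := by rw [← mul_assoc, hpb]
    have hbap : b * a * p = b * a := by rw [← hcomm, hpba]
    obtain ⟨t₀, ht₀⟩ : ∃ x : R, x = p * t * p := ⟨_, rfl⟩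
    have hP : b * a * t₀ * (b * a) = p := by
      have h : b * a * t₀ * (b * a) = b * a * p * (t * (p * (b * a))) := by
        rw [ht₀]; simp only [mul_assoc]
      rw [h, hbap, hpba, ht]; simp only [mul_assoc]
    have hpt0 : p * t₀ = t₀ := by rw [ht₀, ← mul_assoc, ← mul_assoc, hp2]
    obtain ⟨q, hq⟩ : ∃ x : R, x = a * t₀ * (b * a) * b := ⟨_, rfl⟩
    obtain ⟨q', hq'⟩ : ∃ x : R, x = a * (b * a) * t₀ * b := ⟨_, rfl⟩
    have hbq : b * q = b := by
      have h : b * q = b * a * t₀ * (b * a) * b := by rw [hq]; simp only [mul_assoc]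
      rw [h, hP, hpb]
    have hq2 : q * q = q := by
      have h : q * q = a * t₀ * (b * a) * (b * a * t₀ * (b * a)) * b := by
        rw [hq]; simp only [mul_assoc]
      rw [h, hP]
      have h2 : a * t₀ * (b * a) * p * b = a * t₀ * (b * a) * (p * b) := by
        simp only [mul_assoc]
      rw [h2, hpb, hq]
    have hq'2 : q' * q' = q' := by
      have h : q' * q' = a * (b * a * t₀ * (b * a)) * ((b * a) * t₀ * b) := by
        rw [hq']; simp only [mul_assoc]
      rw [h, hP]
      have h2 : a * p * ((b * a) * t₀ * b) = a * (p * (b * a)) * (t₀ * b) := by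
        simp only [mul_assoc]
      rw [h2, hpba, hq']; simp only [mul_assoc]
    have hq'q : q' * q = q := by
      have h : q' * q = a * (b * a * t₀ * (b * a)) * (t₀ * ((b * a) * b)) := by
        rw [hq, hq']; simp only [mul_assoc]
      rw [h, hP]
      have h2 : a * p * (t₀ * ((b * a) * b)) = a * (p * t₀) * ((b * a) * b) := by
        simp only [mul_assoc]
      rw [h2, hpt0, hq]; simp only [mul_assoc]
    have hq'ab : q' * (a * b) = a * b := by
      have h : q' * (a * b) = a * (b * a * t₀ * (b * a)) * b := by
        rw [hq']; simp only [mul_assoc]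
      rw [h, hP, mul_assoc, hpb]
    refine ⟨p, q + q' - q * q', ⟨hp2, a * t₀, ?_⟩,
      ⟨?_, a * t₀ * b * a * t₀ * b * a + a * t₀ - a * t₀ * b * a * t₀ * b * a * b * a * b * a * t₀,
        ?_⟩, hpb, ?_, hbap, ?_⟩
    · rw [← hP]; simp only [mul_assoc]
    · -- idempotency of Q = q + q' - q*q'
      have k1 : q * (q * q') = q * q' := by rw [← mul_assoc, hq2]
      have k2 : q' * (q * q') = q * q' := by rw [← mul_assoc, hq'q]
      have k3 : q * q' * q = q := by rw [mul_assoc, hq'q, hq2]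
      have k4 : q * q' * q' = q * q' := by rw [mul_assoc, hq'2]
      have k5 : q * q' * (q * q') = q * q' := by rw [← mul_assoc, k3]
      simp only [sub_mul, mul_sub, add_mul, mul_add]
      rw [k1, k2, k5, k3, k4, hq2, hq'2, hq'q]
      abel
    · -- membership: Q = a*b*S*b
      have m1 : q' = a * b * (a * t₀) * b := by rw [hq']; simp only [mul_assoc]
      have m3 : q * q' = a * b * (a * t₀ * b * a * t₀ * b * a * b * a * b * a * t₀) * b := by
        rw [← hq'q, hq, hq']; simp only [mul_assoc]
      have m2 : q = a * b * (a * t₀ * b * a * t₀ * b * a) * b := by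
        rw [← hq'q, hq, hq']; simp only [mul_assoc]
      rw [m3, m2, m1]
      noncomm_ring
    · -- b * Q = b
      have hbqq' : b * (q * q') = b * q' := by rw [← mul_assoc, hbq]
      simp only [mul_add, mul_sub]
      rw [hbqq', hbq]
      abel
    · -- Q * (a*b) = a*b
      simp only [add_mul, sub_mul]
      rw [mul_assoc, hq'ab]
      abel
end

section
/- Let R be an associative ring with unity and a,b,c ∈ R. If r and r' are both dual right (b,c)-spectral idempotents of a (i.e., r² = r ∈ acRb, br = b, rac = ac, and likewise for r'), then r = r'. -/
/-- Uniqueness of the dual right (b,c)-spectral idempotent. -/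
theorem dual_right_bc_spectral_idempotent_unique {R : Type*} [Ring R] (a b c r r' : R)
    (hr_idem : r * r = r) (hr_mem : ∃ t : R, r = a * c * t * b)
    (hr_b : b * r = b) (hr_ac : r * (a * c) = a * c)
    (hr'_idem : r' * r' = r') (hr'_mem : ∃ t : R, r' = a * c * t * b)
    (hr'_b : b * r' = b) (hr'_ac : r' * (a * c) = a * c) :
    r = r' := by
  obtain ⟨t, ht⟩ := hr_mem
  obtain ⟨t', ht'⟩ := hr'_mem
  have h1 : r * r' = r := by
    calc r * r' = a * c * t * (b * r') := by rw [ht]; noncomm_ring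
    _ = r := by rw [hr'_b, ht]
  have h2 : r * r' = r' := by
    calc r * r' = r * (a * c) * t' * b := by rw [ht']; noncomm_ring
    _ = r' := by rw [hr_ac, ht']
  rw [← h1, h2]
end

section
/- Let R be an associative ring with unity and a,b,c ∈ R. Then a is dually (b,c)-polar if and only if a is (c,b)-invertible. -/
/-- a is dually (b,c)-polar iff a is (c,b)-invertible. -/
theorem dually_bc_polar_iff_cb_invertible {R : Type*} [Ring R] (a b c : R) :
    (∃ r s : R,
      (r * r = r ∧ ∃ t : R, r = a * c * t * b) ∧
      (s * s = s ∧ ∃ t : R, s = c * t * (b * a)) ∧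
      b * r = b ∧ s * c = c ∧ r * (a * c) = a * c ∧ b * a * s = b * a) ↔
    (∃ y : R, (∃ u : R, y = c * u) ∧ (∃ v : R, y = v * b) ∧
      y * a * c = c ∧ b * a * y = b) := by
  constructor
  · rintro ⟨r, s, ⟨hr2, t, hrt⟩, ⟨hs2, u, hsu⟩, hbr, hsc, hrac, hbas⟩
    subst hrt hsu
    refine ⟨c * u * (b * a) * (c * t * b),
      ⟨u * (b * a) * (c * t * b), by noncomm_ring⟩,
      ⟨c * u * (b * a) * c * t, by noncomm_ring⟩, ?_, ?_⟩
    · rw [show c * u * (b * a) * (c * t * b) * a * c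
          = c * u * b * (a * c * t * b * (a * c)) by noncomm_ring, hrac,
        show c * u * b * (a * c) = c * u * (b * a) * c by noncomm_ring, hsc]
    · rw [show b * a * (c * u * (b * a) * (c * t * b))
          = b * a * (c * u * (b * a)) * (c * t * b) by noncomm_ring, hbas,
        show b * a * (c * t * b) = b * (a * c * t * b) by noncomm_ring, hbr]
  · rintro ⟨y, ⟨u, hu⟩, ⟨v, hv⟩, hyac, hbay⟩
    have hyay : y * a * y = y := by
      calc y * a * y = y * a * (c * u) := by rw [← hu]
        _ = y * a * c * u := by noncomm_ring
        _ = c * u := by rw [hyac]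
        _ = y := hu.symm
    have hy2 : y = c * u * a * (v * b) := by
      rw [← hu, ← hv]; exact hyay.symm
    refine ⟨a * y, y * a,
      ⟨?_, u * a * v, ?_⟩, ⟨?_, u * a * v, ?_⟩, ?_, ?_, ?_, ?_⟩
    · rw [show a * y * (a * y) = a * (y * a * y) by noncomm_ring, hyay]
    · rw [hy2]; noncomm_ring
    · rw [show y * a * (y * a) = (y * a * y) * a by noncomm_ring, hyay]
    · rw [hy2]; noncomm_ring
    · rw [show b * (a * y) = b * a * y by noncomm_ring, hbay]
    · exact hyac
    · rw [show a * y * (a * c) = a * (y * a * c) by noncomm_ring, hyac]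
    · rw [show b * a * (y * a) = (b * a * y) * a by noncomm_ring, hbay]
end

section
/- Let R be a *-ring with unity and a,b,c ∈ R. Then a is (b,c)-polar if and only if a* is dually (b*,c*)-polar. -/
/-- In a *-ring, a is (b,c)-polar iff a* is dually (b*,c*)-polar. -/
theorem bc_polar_iff_star_dually_polar {R : Type*} [Ring R] [StarRing R] (a b c : R) :
    (∃ p q : R,
      (p * p = p ∧ ∃ t : R, p = b * t * (c * a)) ∧
      (q * q = q ∧ ∃ t : R, q = a * b * t * c) ∧
      p * b = b ∧ c * q = c ∧ c * a * p = c * a ∧ q * (a * b) = a * b) ↔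
    (∃ r s : R,
      (r * r = r ∧ ∃ t : R, r = star a * star c * t * star b) ∧
      (s * s = s ∧ ∃ t : R, s = star c * t * (star b * star a)) ∧
      star b * r = star b ∧ s * star c = star c ∧
      r * (star a * star c) = star a * star c ∧
      star b * star a * s = star b * star a) := by
  constructor
  · rintro ⟨p, q, ⟨hp2, t, ht⟩, ⟨hq2, u, hu⟩, hpb, hcq, hcap, hqab⟩
    refine ⟨star p, star q, ⟨by rw [← star_mul, hp2], star t, by rw [ht]; simp [mul_assoc]⟩,
      ⟨by rw [← star_mul, hq2], star u, by rw [hu]; simp [mul_assoc]⟩,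
      by rw [← star_mul, hpb], by rw [← star_mul, hcq],
      ?_, ?_⟩
    · have := congrArg star hcap
      simpa [mul_assoc] using this
    · have := congrArg star hqab
      simpa [mul_assoc] using this
  · rintro ⟨r, s, ⟨hr2, t, ht⟩, ⟨hs2, u, hu⟩, hbr, hsc, hrac, hbas⟩
    refine ⟨star r, star s, ⟨by rw [← star_mul, hr2], star t, ?_⟩,
      ⟨by rw [← star_mul, hs2], star u, ?_⟩,
      by simpa using congrArg star hbr, by simpa using congrArg star hsc, ?_, ?_⟩
    · rw [ht]; simp [mul_assoc]
    · rw [hu]; simp [mul_assoc]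
    · have := congrArg star hrac
      simpa [mul_assoc] using this
    · have := congrArg star hbas
      simpa [mul_assoc] using this
end

section
/- Let R be an associative ring with unity and a,b,c ∈ R with a (b,c)-polar, ab = ba, ac = ca, and ba = ca. Then the left (b,c)-spectral idempotent p of a commutes with ba (i.e., p(ba) = (ba)p), and ba + 1 − p is left invertible in R. -/
/-- If a is (b,c)-polar, ab = ba, ac = ca, ba = ca, then the left (b,c)-spectral
idempotent p commutes with ba and ba + 1 - p is left invertible. -/
theorem left_spectral_comm_and_left_invertible {R : Type*} [Ring R] (a b c p q : R)
    (hp_idem : p * p = p) (hp_mem : ∃ t : R, p = b * t * (c * a))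
    (hp_b : p * b = b) (hp_ca : c * a * p = c * a)
    (hq_idem : q * q = q) (hq_mem : ∃ t : R, q = a * b * t * c)
    (hq_c : c * q = c) (hq_ab : q * (a * b) = a * b)
    (hab : a * b = b * a) (hac : a * c = c * a) (hbc : b * a = c * a) :
    p * (b * a) = (b * a) * p ∧ ∃ u : R, u * (b * a + 1 - p) = 1 := by
  obtain ⟨t, ht⟩ := hp_mem
  have hpba : p * (b * a) = b * a := by rw [← mul_assoc, hp_b]
  have hbap : (b * a) * p = b * a := by rw [hbc, hp_ca]
  have hv : (b * t) * (b * a) = p := by rw [hbc, ht, mul_assoc]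
  have hs1 : p * (b * t) * p * (b * a) = p := by
    rw [mul_assoc (p * (b * t)) p, hpba, mul_assoc, hv, hp_idem]
  refine ⟨hpba.trans hbap.symm, ⟨p * (b * t) * p + (1 - p), ?_⟩⟩
  have expand : (p * (b * t) * p + (1 - p)) * (b * a + 1 - p)
      = (p * (b * t) * p * (b * a) + p * (b * t) * p - p * (b * t) * p * p)
        + ((b * a) + 1 - p) - (p * (b * a) + p - p * p) := by noncomm_ring
  rw [expand, hs1, hpba, hp_idem, mul_assoc (p * (b * t)) p p, hp_idem]
  abel
end

section
/- Let R be an associative ring with unity and a,b,c ∈ R with a (b,c)-polar, ab = ba, ac = ca, and ba = ca. Then the right (b,c)-spectral idempotent q of a commutes with ac, and ac + 1 − q is right invertible in R. -/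
/-- If a is (b,c)-polar, ab = ba, ac = ca, ba = ca, then the right (b,c)-spectral
idempotent q commutes with ac and ac + 1 - q is right invertible. -/
theorem right_spectral_comm_and_right_invertible {R : Type*} [Ring R] (a b c p q : R)
    (hp_idem : p * p = p) (hp_mem : ∃ t : R, p = b * t * (c * a))
    (hp_b : p * b = b) (hp_ca : c * a * p = c * a)
    (hq_idem : q * q = q) (hq_mem : ∃ t : R, q = a * b * t * c)
    (hq_c : c * q = c) (hq_ab : q * (a * b) = a * b)
    (hab : a * b = b * a) (hac : a * c = c * a) (hbc : b * a = c * a) :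
    q * (a * c) = (a * c) * q ∧ ∃ u : R, (a * c + 1 - q) * u = 1 := by
  obtain ⟨t, ht⟩ := hq_mem
  have hab_ac : a * b = a * c := by rw [hab, hbc, ← hac]
  have h1 : a * c * q = a * c := by rw [mul_assoc, hq_c]
  have h2 : q * (a * c) = a * c := by rw [← hab_ac, hq_ab]
  have hk : a * c * t * c = q := by rw [← hab_ac, ← ht]
  refine ⟨by rw [h2, h1], ⟨q * t * c * q + 1 - q, ?_⟩⟩
  have e1 : a * c * (q * t * c * q) = q := by
    calc a * c * (q * t * c * q) = a * c * q * t * c * q := by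
          simp only [mul_assoc]
      _ = q := by rw [h1, hk, hq_idem]
  calc (a * c + 1 - q) * (q * t * c * q + 1 - q)
      = a * c * (q * t * c * q) + a * c - a * c * q + (q * t * c * q) + 1 - q
        - (q * (q * t * c * q)) - q + q * q := by
          simp only [sub_mul, add_mul, mul_sub, mul_add, one_mul, mul_one]; abel
    _ = 1 := by
        have e2 : q * (q * t * c * q) = q * t * c * q := by
          simp only [← mul_assoc, hq_idem]
        rw [e1, h1, e2, hq_idem]; abel
end

section
/- Let R be an associative ring with unity, a,b,c,d ∈ R, and suppose a is (b,c)-polar with left (b,c)-spectral idempotent p and right (b,c)-spectral idempotent q. If d is (b,c)-polar with left (b,c)-spectral idempotent p' and right (b,c)-spectral idempotent q', and cdp = cd and qdb = db, then p = p' and q = q'. -/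
/-- If a and d are both (b,c)-polar with spectral idempotents (p,q), (p',q')
and cdp = cd, qdb = db, then p = p' and q = q'. -/
theorem spectral_idempotents_eq {R : Type*} [Ring R] (a b c d p q p' q' : R)
    (hp_idem : p * p = p) (hp_mem : ∃ t : R, p = b * t * (c * a))
    (hp_b : p * b = b) (hp_ca : c * a * p = c * a)
    (hq_idem : q * q = q) (hq_mem : ∃ t : R, q = a * b * t * c)
    (hq_c : c * q = c) (hq_ab : q * (a * b) = a * b)
    (hp'_idem : p' * p' = p') (hp'_mem : ∃ t : R, p' = b * t * (c * d))
    (hp'_b : p' * b = b) (hp'_cd : c * d * p' = c * d)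
    (hq'_idem : q' * q' = q') (hq'_mem : ∃ t : R, q' = d * b * t * c)
    (hq'_c : c * q' = c) (hq'_db : q' * (d * b) = d * b)
    (hcdp : c * d * p = c * d) (hqdb : q * (d * b) = d * b) :
    p = p' ∧ q = q' := by
  obtain ⟨t, ht⟩ := hp_mem
  obtain ⟨t', ht'⟩ := hp'_mem
  obtain ⟨s, hs⟩ := hq_mem
  obtain ⟨s', hs'⟩ := hq'_mem
  constructor
  · have h1 : p' * p = p' := by
      calc p' * p = b * t' * (c * d * p) := by rw [ht']; noncomm_ring
        _ = p' := by rw [hcdp, ht']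
    calc p = p' * b * t * (c * a) := by rw [hp'_b, ht]
      _ = p' * p := by rw [ht]; noncomm_ring
      _ = p' := h1
  · have h1 : q * q' = q' := by
      calc q * q' = q * (d * b) * s' * c := by rw [hs']; noncomm_ring
        _ = q' := by rw [hqdb, hs']
    calc q = a * b * s * (c * q') := by rw [hq'_c, hs]
      _ = q * q' := by rw [hs]; noncomm_ring
      _ = q' := h1
end

section
/- Let X be a Banach space and A, B, C ∈ B(X) bounded linear operators. Suppose there exist bounded projections P, Q ∈ B(X) with P² = P ∈ B·B(X)·C·A, Q² = Q ∈ A·B·B(X)·C, PB = B, CQ = C, CAP = CA, QAB = AB. Then range(P) = range(B), ker(Q) = ker(C), range(Q) = range(AB), and ker(P) = ker(CA). -/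
open ContinuousLinearMap

/-- If A is (B,C)-polar with projections P, Q, then range P = range B,
ker Q = ker C, range Q = range (AB), ker P = ker (CA). -/
theorem bc_polar_operator_ranges {X : Type*} [NormedAddCommGroup X]
    [NormedSpace ℂ X] [CompleteSpace X] (A B C P Q : X →L[ℂ] X)
    (hP_idem : P ∘L P = P) (hP_mem : ∃ R : X →L[ℂ] X, P = B ∘L R ∘L (C ∘L A))
    (hQ_idem : Q ∘L Q = Q) (hQ_mem : ∃ R : X →L[ℂ] X, Q = (A ∘L B) ∘L R ∘L C)
    (hPB : P ∘L B = B) (hCQ : C ∘L Q = C)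
    (hCAP : C ∘L A ∘L P = C ∘L A) (hQAB : Q ∘L (A ∘L B) = A ∘L B) :
    LinearMap.range (P : X →ₗ[ℂ] X) = LinearMap.range (B : X →ₗ[ℂ] X) ∧
    LinearMap.ker (Q : X →ₗ[ℂ] X) = LinearMap.ker (C : X →ₗ[ℂ] X) ∧
    LinearMap.range (Q : X →ₗ[ℂ] X) = LinearMap.range ((A ∘L B : X →L[ℂ] X) : X →ₗ[ℂ] X) ∧
    LinearMap.ker (P : X →ₗ[ℂ] X) = LinearMap.ker ((C ∘L A : X →L[ℂ] X) : X →ₗ[ℂ] X) := by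
  obtain ⟨R, hR⟩ := hP_mem
  obtain ⟨S, hS⟩ := hQ_mem
  refine ⟨?_, ?_, ?_, ?_⟩
  · apply le_antisymm
    · rintro _ ⟨x, rfl⟩
      exact ⟨R ((C ∘L A) x), by rw [hR]; simp⟩
    · rintro _ ⟨x, rfl⟩
      have := ContinuousLinearMap.ext_iff.mp hPB x
      simp only [comp_apply] at this
      exact ⟨B x, this⟩
  · ext x
    constructor
    · intro hx
      have : C (Q x) = C x := ContinuousLinearMap.ext_iff.mp hCQ x
      simp only [LinearMap.mem_ker, ContinuousLinearMap.coe_coe] at hx ⊢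
      rw [← this, hx, map_zero]
    · intro hx
      simp only [LinearMap.mem_ker, ContinuousLinearMap.coe_coe] at hx ⊢
      rw [hS]; simp [hx]
  · apply le_antisymm
    · rintro _ ⟨x, rfl⟩
      exact ⟨S (C x), by rw [hS]; simp⟩
    · rintro _ ⟨x, rfl⟩
      have := ContinuousLinearMap.ext_iff.mp hQAB x
      simp only [comp_apply] at this ⊢
      exact ⟨A (B x), this⟩
  · ext x
    constructor
    · intro hx
      have : (C ∘L A) (P x) = (C ∘L A) x := ContinuousLinearMap.ext_iff.mp hCAP x
      simp only [LinearMap.mem_ker, ContinuousLinearMap.coe_coe] at hx ⊢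
      rw [← this, hx]; simp
    · intro hx
      simp only [LinearMap.mem_ker, ContinuousLinearMap.coe_coe] at hx ⊢
      rw [hR]; simp only [comp_apply] at hx ⊢
      rw [hx]; simp
end

section
/- Let X be a Banach space and A, B, C ∈ B(X). Suppose there exist bounded projections P, Q with range(P) = range(B), ker(Q) = ker(C), range(Q) = range(AB), ker(P) = ker(CA). Then range(C) = range(CAB) and ker(B) = ker(CAB). -/
open ContinuousLinearMap

/-- If projections P, Q satisfy range P = range B, ker Q = ker C,
range Q = range (AB), ker P = ker (CA), then range C = range (CAB) and
ker B = ker (CAB). -/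
theorem range_ker_of_projections {X : Type*} [NormedAddCommGroup X]
    [NormedSpace ℂ X] [CompleteSpace X] (A B C P Q : X →L[ℂ] X)
    (hP_idem : P ∘L P = P) (hQ_idem : Q ∘L Q = Q)
    (hP_range : LinearMap.range (P : X →ₗ[ℂ] X) = LinearMap.range (B : X →ₗ[ℂ] X))
    (hQ_ker : LinearMap.ker (Q : X →ₗ[ℂ] X) = LinearMap.ker (C : X →ₗ[ℂ] X))
    (hQ_range : LinearMap.range (Q : X →ₗ[ℂ] X) = LinearMap.range (A ∘L B : X →ₗ[ℂ] X))
    (hP_ker : LinearMap.ker (P : X →ₗ[ℂ] X) = LinearMap.ker (C ∘L A : X →ₗ[ℂ] X)) :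
    LinearMap.range (C : X →ₗ[ℂ] X) = LinearMap.range (C ∘L A ∘L B : X →ₗ[ℂ] X) ∧
    LinearMap.ker (B : X →ₗ[ℂ] X) = LinearMap.ker (C ∘L A ∘L B : X →ₗ[ℂ] X) := by
  constructor
  · apply le_antisymm
    · rintro _ ⟨x, rfl⟩
      have hQx : Q x ∈ LinearMap.range (A ∘L B : X →ₗ[ℂ] X) := hQ_range ▸ LinearMap.mem_range_self _ x
      obtain ⟨y, hy⟩ := hQx
      have hker : x - Q x ∈ LinearMap.ker (C : X →ₗ[ℂ] X) := by
        rw [← hQ_ker, LinearMap.mem_ker]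
        have := congrArg (fun T : X →L[ℂ] X => T x) hQ_idem
        simp only [ContinuousLinearMap.comp_apply] at this
        simp [map_sub, this]
      have hC : C x = C (Q x) := by
        have := (LinearMap.mem_ker.mp hker)
        simp only [map_sub, sub_eq_zero] at this
        exact this
      refine ⟨y, ?_⟩
      simp only [ContinuousLinearMap.coe_coe, ContinuousLinearMap.comp_apply] at hy ⊢
      rw [hy, ← hC]
    · rintro _ ⟨x, rfl⟩
      exact ⟨A (B x), rfl⟩
  · apply le_antisymm
    · intro x hx
      rw [LinearMap.mem_ker] at hx ⊢
      simp only [ContinuousLinearMap.coe_coe] at hx ⊢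
      simp only [ContinuousLinearMap.comp_apply, hx, map_zero]
    · intro x hx
      rw [LinearMap.mem_ker] at hx ⊢
      simp only [ContinuousLinearMap.coe_coe, ContinuousLinearMap.comp_apply] at hx
      have h1 : B x ∈ LinearMap.ker (P : X →ₗ[ℂ] X) := by
        rw [hP_ker, LinearMap.mem_ker]
        simpa using hx
      have h2 : B x ∈ LinearMap.range (P : X →ₗ[ℂ] X) := hP_range ▸ LinearMap.mem_range_self _ x
      obtain ⟨z, hz⟩ := h2
      have hPz : P (P z) = P z := by
        have := congrArg (fun T : X →L[ℂ] X => T z) hP_idem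
        simpa using this
      rw [LinearMap.mem_ker] at h1
      simp only [ContinuousLinearMap.coe_coe] at h1 hz
      rw [← hz, hPz] at h1
      rw [ContinuousLinearMap.coe_coe, ← hz, h1]
end

section
/- Let X be a Banach space, A, B ∈ B(X), and suppose there exists a bounded projection P with ker(P) = ker(BA) = ker(B) and range(P) = range(AB) = range(B). Then X = range(AB) ⊕ ker(B) and the restriction A|range(B) : range(B) → range(AB) is bijective. -/
open ContinuousLinearMap

/-- If there is a bounded projection P with ker P = ker (BA) = ker B and
range P = range (AB) = range B, then X = range (AB) ⊕ ker B and the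
restriction of A to range B is a bijection onto range (AB). -/
theorem polar_along_operator_decomposition {X : Type*} [NormedAddCommGroup X]
    [NormedSpace ℂ X] [CompleteSpace X] (A B P : X →L[ℂ] X)
    (hP_idem : P ∘L P = P)
    (hker1 : LinearMap.ker (P : X →ₗ[ℂ] X) = LinearMap.ker ((B ∘L A : X →L[ℂ] X) : X →ₗ[ℂ] X))
    (hker2 : LinearMap.ker (P : X →ₗ[ℂ] X) = LinearMap.ker (B : X →ₗ[ℂ] X))
    (hrange1 : LinearMap.range (P : X →ₗ[ℂ] X) = LinearMap.range ((A ∘L B : X →L[ℂ] X) : X →ₗ[ℂ] X))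
    (hrange2 : LinearMap.range (P : X →ₗ[ℂ] X) = LinearMap.range (B : X →ₗ[ℂ] X)) :
    IsCompl (LinearMap.range ((A ∘L B : X →L[ℂ] X) : X →ₗ[ℂ] X)) (LinearMap.ker (B : X →ₗ[ℂ] X)) ∧
    Set.BijOn A (Set.range B) (Set.range (A ∘L B)) := by
  have hPP : ∀ y, P (P y) = P y := fun y => by rw [← ContinuousLinearMap.comp_apply, hP_idem]
  have key : ∀ x, x ∈ LinearMap.range (P : X →ₗ[ℂ] X) → P x = 0 → x = 0 := by
    rintro x ⟨y, rfl⟩ hx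
    simp only [ContinuousLinearMap.coe_coe] at hx ⊢; rw [← hPP y]; exact hx
  constructor
  · rw [← hrange1, ← hker2]
    constructor
    · rw [Submodule.disjoint_def]
      intro x hx hx'
      exact key x hx (LinearMap.mem_ker.mp hx')
    · rw [codisjoint_iff_le_sup]
      intro x _
      have h1 : P x ∈ LinearMap.range (P : X →ₗ[ℂ] X) := ⟨x, rfl⟩
      have h2 : x - P x ∈ LinearMap.ker (P : X →ₗ[ℂ] X) := by
        simp [LinearMap.mem_ker, map_sub, hPP]
      have hx : x = P x + (x - P x) := by abel
      exact hx ▸ Submodule.add_mem_sup h1 h2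
  · refine ⟨?_, ?_, ?_⟩
    · rintro x ⟨u, rfl⟩
      exact ⟨u, by simp⟩
    · rintro x ⟨u, rfl⟩ y ⟨v, rfl⟩ hxy
      have h1 : B u - B v ∈ LinearMap.ker (P : X →ₗ[ℂ] X) := by
        rw [hker1]
        simp only [LinearMap.mem_ker, ContinuousLinearMap.coe_coe, ContinuousLinearMap.comp_apply, map_sub, hxy, sub_self]
      have h2 : B u - B v ∈ LinearMap.range (P : X →ₗ[ℂ] X) := by
        rw [hrange2]; exact ⟨u - v, by simp [map_sub]⟩
      exact sub_eq_zero.mp (key _ h2 (LinearMap.mem_ker.mp h1))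
    · rintro x ⟨u, rfl⟩
      exact ⟨B u, ⟨u, rfl⟩, by simp⟩
end
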